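/- Let ℏ > 1 be real. For every real x the integral F(x) = ∫_0^∞ t^{−1/ℏ}·exp(−(t²/2 + x·t)/ℏ) dt converges; F is twice differentiable on ℝ and satisfies the second-order linear differential equation ℏ²·F″(x) − ℏ·x·F′(x) + (1 − ℏ)·F(x) = 0 for all x ∈ ℝ. -/

import Mathlib

open MeasureTheory
open Real Filter Set

lemma qc_tendBot (h : ℝ) (hh : 0 < h) (q c b : ℝ) :
    Tendsto (fun t : ℝ => q * Real.log t + (-(t ^ 2 / 2 + c * t) / h) + b * t) atTop atBot := by
  have key : Tendsto (fun t : ℝ => t * ((|q| + b + |c| / h) - t / (2 * h))) atTop atBot := by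
    apply Tendsto.atTop_mul_atBot₀ tendsto_id
    have h1 : Tendsto (fun t : ℝ => t / (2 * h)) atTop atTop :=
      tendsto_id.atTop_div_const (by positivity)
    exact by
      have := tendsto_atBot_add_const_left atTop (|q| + b + |c| / h)
        (tendsto_neg_atTop_atBot.comp h1)
      simpa [Function.comp, sub_eq_add_neg] using this
  apply tendsto_atBot_mono' _ _ key
  filter_upwards [eventually_ge_atTop (1 : ℝ)] with t ht
  have ht0 : (0:ℝ) < t := lt_of_lt_of_le one_pos ht
  have hlog1 : Real.log t ≤ t := (Real.log_le_sub_one_of_pos ht0).trans (by linarith)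
  have hlog0 : 0 ≤ Real.log t := Real.log_nonneg ht
  have h1 : q * Real.log t ≤ |q| * t := by
    calc q * Real.log t ≤ |q| * Real.log t := mul_le_mul_of_nonneg_right (le_abs_self q) hlog0
    _ ≤ |q| * t := mul_le_mul_of_nonneg_left hlog1 (abs_nonneg q)
  have h2 : -(t ^ 2 / 2 + c * t) / h ≤ (|c| * t - t ^ 2 / 2) / h := by
    apply (div_le_div_iff_of_pos_right hh).2 ?_
    nlinarith [neg_abs_le c, abs_nonneg c]
  have h3 : (|c| * t - t ^ 2 / 2) / h = (|c| / h) * t - t * (t / (2 * h)) := by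
    field_simp
  nlinarith [h1, h2, h3]

lemma qc_cont (h q c : ℝ) :
    ContinuousOn (fun t : ℝ => t ^ q * Real.exp (-(t ^ 2 / 2 + c * t) / h)) (Set.Ioi 0) := by
  apply ContinuousOn.mul
  · intro t ht
    exact (Real.continuousAt_rpow_const t q (Or.inl (ne_of_gt ht))).continuousWithinAt
  · fun_prop

lemma qc_int (h : ℝ) (hh : 0 < h) (q c : ℝ) (hq : -1 < q) :
    IntegrableOn (fun t : ℝ => t ^ q * Real.exp (-(t ^ 2 / 2 + c * t) / h)) (Set.Ioi 0) := by
  rw [← Set.Ioc_union_Ioi_eq_Ioi (zero_le_one (α := ℝ))]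
  apply IntegrableOn.union
  · -- on Ioc 0 1
    apply Integrable.mono' (g := fun t : ℝ => Real.exp (|c| / h) * t ^ q)
    · exact ((intervalIntegral.intervalIntegrable_rpow' hq (a := 0) (b := 1)).1).const_mul _
    · exact ((qc_cont h q c).mono (fun t ht => ht.1)).aestronglyMeasurable measurableSet_Ioc
    · rw [ae_restrict_iff' measurableSet_Ioc]
      filter_upwards with t ht
      have ht0 : (0:ℝ) < t := ht.1
      rw [Real.norm_eq_abs, abs_of_nonneg (by positivity)]
      have hE : -(t ^ 2 / 2 + c * t) / h ≤ |c| / h := by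
        apply (div_le_div_iff_of_pos_right hh).2
        nlinarith [neg_abs_le c, abs_nonneg c, ht.2, ht0.le]
      calc t ^ q * Real.exp (-(t ^ 2 / 2 + c * t) / h)
          ≤ t ^ q * Real.exp (|c| / h) :=
            mul_le_mul_of_nonneg_left (Real.exp_le_exp.2 hE) (Real.rpow_nonneg ht0.le q)
        _ = Real.exp (|c| / h) * t ^ q := mul_comm _ _
  · -- on Ioi 1
    apply integrable_of_isBigO_exp_neg (b := 1) one_pos
      ((qc_cont h q c).mono (fun t (ht : t ∈ Set.Ici (1:ℝ)) => Set.mem_Ioi.2 (lt_of_lt_of_le one_pos ht)))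
    apply Asymptotics.IsBigO.of_bound 1
    have hb := (qc_tendBot h hh q c 1).eventually (eventually_le_atBot 0)
    filter_upwards [hb, eventually_gt_atTop (0:ℝ)] with t hbt ht0
    rw [Real.rpow_def_of_pos ht0, ← Real.exp_add, one_mul, Real.norm_eq_abs, Real.norm_eq_abs,
      Real.abs_exp, Real.abs_exp, Real.exp_le_exp]
    nlinarith [hbt]

lemma qc_hasDerivX (h t A x : ℝ) :
    HasDerivAt (fun x : ℝ => A * Real.exp (-(t ^ 2 / 2 + x * t) / h))
      (-(t / h) * (A * Real.exp (-(t ^ 2 / 2 + x * t) / h))) x := by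
  have h1 : HasDerivAt (fun x : ℝ => -(t ^ 2 / 2 + x * t) / h) (-(t / h)) x := by
    have := (((hasDerivAt_id x).mul_const t).const_add (t ^ 2 / 2)).neg.div_const h
    exact this.congr_deriv (by ring)
  have := h1.exp.const_mul A
  exact this.congr_deriv (by ring)

lemma qc_eqOn (h : ℝ) (q c : ℝ) :
    Set.EqOn (fun t : ℝ => t ^ (q + 1) * Real.exp (-(t ^ 2 / 2 + c * t) / h))
      (fun t : ℝ => t * (t ^ q * Real.exp (-(t ^ 2 / 2 + c * t) / h))) (Set.Ioi 0) := by
  intro t ht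
  simp only
  rw [Real.rpow_add_one (ne_of_gt ht)]
  ring

lemma qc_gen (h : ℝ) (hh : 1 < h) (a q : ℝ) (hq : -1 < q) (x₀ : ℝ) :
    HasDerivAt (fun x : ℝ => ∫ t in Set.Ioi (0:ℝ), a * (t ^ q * Real.exp (-(t ^ 2 / 2 + x * t) / h)))
      (∫ t in Set.Ioi (0:ℝ), (a * -(1/h)) * (t ^ (q+1) * Real.exp (-(t ^ 2 / 2 + x₀ * t) / h))) x₀ := by
  have h0 : (0:ℝ) < h := lt_trans one_pos hh
  have key := hasDerivAt_integral_of_dominated_loc_of_deriv_le (μ := volume.restrict (Set.Ioi (0:ℝ)))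
    (F := fun x t => a * (t ^ q * Real.exp (-(t ^ 2 / 2 + x * t) / h)))
    (F' := fun x t => -(t / h) * (a * (t ^ q * Real.exp (-(t ^ 2 / 2 + x * t) / h))))
    (x₀ := x₀)
    (bound := fun t => (|a| / h) * (t ^ (q+1) * Real.exp (-(t ^ 2 / 2 + (x₀ - 1) * t) / h)))
    (Metric.ball_mem_nhds x₀ one_pos)
    (Filter.Eventually.of_forall fun x =>
      (((qc_cont h q x).const_smul a).aestronglyMeasurable measurableSet_Ioi))
    ((qc_int h h0 q x₀ hq).const_mul a)
    (by
      apply ContinuousOn.aestronglyMeasurable _ measurableSet_Ioi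
      exact (continuousOn_id.div_const h).neg.mul ((qc_cont h q x₀).const_smul a))
    (by
      rw [ae_restrict_iff' measurableSet_Ioi]
      filter_upwards with t ht x hx
      have ht0 : (0:ℝ) < t := ht
      have hxl : x₀ - 1 ≤ x := by
        have := abs_sub_lt_iff.1 (mem_ball_iff_norm.1 hx)
        linarith [this.2]
      have hE : -(t ^ 2 / 2 + x * t) / h ≤ -(t ^ 2 / 2 + (x₀ - 1) * t) / h := by
        apply (div_le_div_iff_of_pos_right h0).2
        nlinarith
      rw [Real.norm_eq_abs, abs_mul, abs_mul, abs_mul,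
        abs_of_nonneg (Real.rpow_nonneg ht0.le q), Real.abs_exp,
        Real.rpow_add_one (ne_of_gt ht0)]
      have h1 : |(-(t/h))| = t / h := by
        rw [abs_neg, abs_of_nonneg (by positivity)]
      rw [h1]
      calc t / h * (|a| * (t ^ q * Real.exp (-(t ^ 2 / 2 + x * t) / h)))
          ≤ t / h * (|a| * (t ^ q * Real.exp (-(t ^ 2 / 2 + (x₀-1) * t) / h))) := by
            gcongr
        _ = |a| / h * (t ^ q * t * Real.exp (-(t ^ 2 / 2 + (x₀ - 1) * t) / h)) := by ring)
    ((qc_int h h0 (q+1) (x₀-1) (by linarith)).const_mul _)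
    (by
      filter_upwards with t x _
      have := qc_hasDerivX h t (a * t ^ q) x
      simpa [mul_assoc] using this)
  have heq : (∫ t in Set.Ioi (0:ℝ), (a * -(1/h)) * (t ^ (q+1) * Real.exp (-(t ^ 2 / 2 + x₀ * t) / h)))
      = ∫ t in Set.Ioi (0:ℝ), -(t / h) * (a * (t ^ q * Real.exp (-(t ^ 2 / 2 + x₀ * t) / h))) := by
    apply setIntegral_congr_fun measurableSet_Ioi
    intro t ht
    simp only
    rw [Real.rpow_add_one (ne_of_gt ht)]
    ring
  rw [heq]
  exact key.2

lemma qc_ftc (h : ℝ) (hh : 1 < h) (x : ℝ) :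
    (∫ t in Set.Ioi (0:ℝ),
      (t ^ (-1/h + 1 + 1) * Real.exp (-(t ^ 2 / 2 + x * t) / h)
        + x * (t ^ (-1/h + 1) * Real.exp (-(t ^ 2 / 2 + x * t) / h))
        + (1 - h) * (t ^ (-1/h) * Real.exp (-(t ^ 2 / 2 + x * t) / h)))) = 0 := by
  have h0 : (0:ℝ) < h := lt_trans one_pos hh
  have hne : h ≠ 0 := ne_of_gt h0
  have hq : (-1:ℝ) < -1/h := by
    rw [neg_div, neg_lt_neg_iff]
    exact (div_lt_one h0).2 hh
  have hp0 : (0:ℝ) < -1/h + 1 := by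
    have : (1:ℝ)/h < 1 := (div_lt_one h0).2 hh
    rw [neg_div]; linarith
  set φ : ℝ → ℝ := fun t => t ^ (-1/h + 1) * Real.exp (-(t ^ 2 / 2 + x * t) / h) with hφ
  set φ' : ℝ → ℝ := fun t => -(1/h) *
      (t ^ (-1/h + 1 + 1) * Real.exp (-(t ^ 2 / 2 + x * t) / h)
        + x * (t ^ (-1/h + 1) * Real.exp (-(t ^ 2 / 2 + x * t) / h))
        + (1 - h) * (t ^ (-1/h) * Real.exp (-(t ^ 2 / 2 + x * t) / h))) with hφ'
  have hderiv : ∀ t ∈ Set.Ioi (0:ℝ), HasDerivAt φ (φ' t) t := by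
    intro t ht
    have ht0 : (0:ℝ) < t := ht
    have r1 : HasDerivAt (fun t : ℝ => t ^ (-1/h + 1))
        ((-1/h + 1) * t ^ (-1/h + 1 - 1)) t :=
      Real.hasDerivAt_rpow_const (Or.inl (ne_of_gt ht0))
    have r2 : HasDerivAt (fun t : ℝ => Real.exp (-(t ^ 2 / 2 + x * t) / h))
        (Real.exp (-(t ^ 2 / 2 + x * t) / h) * (-(t + x) / h)) t := by
      have inner : HasDerivAt (fun t : ℝ => -(t ^ 2 / 2 + x * t) / h) (-(t + x) / h) t := by
        have := (((hasDerivAt_pow 2 t).div_const 2).add ((hasDerivAt_id t).const_mul x)).neg.div_const h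
        exact this.congr_deriv (by ring)
      exact inner.exp
    have := r1.mul r2
    rw [hφ, hφ']
    refine this.congr_deriv ?_
    beta_reduce
    rw [show (-1/h + 1 - 1 : ℝ) = -1/h by ring,
      show (-1/h + 1 + 1 : ℝ) = (-1/h + 1) + 1 by ring,
      Real.rpow_add_one (ne_of_gt ht0) (-1/h + 1),
      Real.rpow_add_one (ne_of_gt ht0) (-1/h)]
    field_simp
    ring
  have hcont : ContinuousWithinAt φ (Set.Ici (0:ℝ)) 0 := by
    apply ContinuousWithinAt.mul
    · exact (Real.continuousAt_rpow_const 0 (-1/h + 1) (Or.inr hp0.le)).continuousWithinAt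
    · exact (Continuous.continuousAt (by fun_prop)).continuousWithinAt
  have hint : IntegrableOn φ' (Set.Ioi (0:ℝ)) := by
    apply Integrable.const_mul
    exact ((qc_int h h0 (-1/h + 1 + 1) x (by linarith)).add
        ((qc_int h h0 (-1/h + 1) x (by linarith)).const_mul x)).add
      ((qc_int h h0 (-1/h) x hq).const_mul (1 - h))
  have htend : Filter.Tendsto φ Filter.atTop (nhds 0) := by
    have hb := qc_tendBot h h0 (-1/h + 1) x 0
    apply (Real.tendsto_exp_atBot.comp hb).congr'
    filter_upwards [Filter.eventually_gt_atTop (0:ℝ)] with t ht0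
    simp only [Function.comp, hφ]
    rw [Real.rpow_def_of_pos ht0, ← Real.exp_add]
    ring_nf
  have key := integral_Ioi_of_hasDerivAt_of_tendsto hcont hderiv hint htend
  have hφ0 : φ 0 = 0 := by
    simp only [hφ]
    rw [Real.zero_rpow (ne_of_gt hp0)]
    ring
  rw [hφ0, sub_zero] at key
  have hre : (fun t : ℝ =>
      (t ^ (-1/h + 1 + 1) * Real.exp (-(t ^ 2 / 2 + x * t) / h)
        + x * (t ^ (-1/h + 1) * Real.exp (-(t ^ 2 / 2 + x * t) / h))
        + (1 - h) * (t ^ (-1/h) * Real.exp (-(t ^ 2 / 2 + x * t) / h))))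
      = fun t => -h * φ' t := by
    funext t
    rw [hφ']
    field_simp
  rw [hre, MeasureTheory.integral_const_mul, key, mul_zero]

theorem stmt17 (h : ℝ) (hh : 1 < h) (F : ℝ → ℝ)
    (hF : ∀ x : ℝ, F x =
      ∫ t in Set.Ioi (0 : ℝ), Real.rpow t (-1 / h) * Real.exp (-(t ^ 2 / 2 + x * t) / h)) :
    (∀ x : ℝ, IntegrableOn
      (fun t : ℝ => Real.rpow t (-1 / h) * Real.exp (-(t ^ 2 / 2 + x * t) / h))
      (Set.Ioi (0 : ℝ))) ∧
    (∀ x : ℝ, DifferentiableAt ℝ F x ∧ DifferentiableAt ℝ (deriv F) x) ∧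
    (∀ x : ℝ, h ^ 2 * deriv (deriv F) x - h * x * deriv F x + (1 - h) * F x = 0) := by
  have h0 : (0:ℝ) < h := lt_trans one_pos hh
  have hne : h ≠ 0 := ne_of_gt h0
  have hq : (-1:ℝ) < -1/h := by
    rw [neg_div, neg_lt_neg_iff]
    exact (div_lt_one h0).2 hh
  have hFfun : F = fun x => ∫ t in Set.Ioi (0:ℝ),
      (1:ℝ) * (t ^ (-1/h) * Real.exp (-(t ^ 2 / 2 + x * t) / h)) := by
    funext x
    rw [hF x]
    simp only [one_mul]
    rfl
  have hD1 : ∀ x : ℝ, HasDerivAt F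
      (∫ t in Set.Ioi (0:ℝ), ((1:ℝ) * -(1/h)) * (t ^ (-1/h + 1) * Real.exp (-(t ^ 2 / 2 + x * t) / h))) x := by
    intro x
    rw [hFfun]
    exact qc_gen h hh 1 (-1/h) hq x
  set G : ℝ → ℝ := fun x => ∫ t in Set.Ioi (0:ℝ),
      ((1:ℝ) * -(1/h)) * (t ^ (-1/h + 1) * Real.exp (-(t ^ 2 / 2 + x * t) / h)) with hG
  have hDF : deriv F = G := funext fun x => (hD1 x).deriv
  have hD2 : ∀ x : ℝ, HasDerivAt G
      (∫ t in Set.Ioi (0:ℝ), (((1:ℝ) * -(1/h)) * -(1/h)) *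
        (t ^ (-1/h + 1 + 1) * Real.exp (-(t ^ 2 / 2 + x * t) / h))) x :=
    fun x => qc_gen h hh ((1:ℝ) * -(1/h)) (-1/h + 1) (by linarith) x
  refine ⟨fun x => qc_int h h0 (-1/h) x hq, fun x => ⟨(hD1 x).differentiableAt, ?_⟩, ?_⟩
  · rw [hDF]
    exact (hD2 x).differentiableAt
  · intro x
    have e1 : deriv F x = ((1:ℝ) * -(1/h)) *
        ∫ t in Set.Ioi (0:ℝ), t ^ (-1/h + 1) * Real.exp (-(t ^ 2 / 2 + x * t) / h) := by
      rw [hDF, hG]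
      exact MeasureTheory.integral_const_mul _ _
    have e2 : deriv (deriv F) x = (((1:ℝ) * -(1/h)) * -(1/h)) *
        ∫ t in Set.Ioi (0:ℝ), t ^ (-1/h + 1 + 1) * Real.exp (-(t ^ 2 / 2 + x * t) / h) := by
      rw [hDF, (hD2 x).deriv]
      exact MeasureTheory.integral_const_mul _ _
    have e0 : F x = ∫ t in Set.Ioi (0:ℝ), t ^ (-1/h) * Real.exp (-(t ^ 2 / 2 + x * t) / h) := hF x
    set I0 := ∫ t in Set.Ioi (0:ℝ), t ^ (-1/h) * Real.exp (-(t ^ 2 / 2 + x * t) / h) with hI0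
    set I1 := ∫ t in Set.Ioi (0:ℝ), t ^ (-1/h + 1) * Real.exp (-(t ^ 2 / 2 + x * t) / h) with hI1
    set I2 := ∫ t in Set.Ioi (0:ℝ), t ^ (-1/h + 1 + 1) * Real.exp (-(t ^ 2 / 2 + x * t) / h) with hI2
    have key : I2 + x * I1 + (1 - h) * I0 = 0 := by
      have i2 := qc_int h h0 (-1/h + 1 + 1) x (by linarith)
      have i1 := (qc_int h h0 (-1/h + 1) x (by linarith)).const_mul x
      have i0 := (qc_int h h0 (-1/h) x hq).const_mul (1 - h)
      have i10 : Integrable (fun t : ℝ => x * (t ^ (-1/h + 1) * Real.exp (-(t ^ 2 / 2 + x * t) / h))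
          + (1 - h) * (t ^ (-1/h) * Real.exp (-(t ^ 2 / 2 + x * t) / h)))
          (volume.restrict (Set.Ioi (0:ℝ))) := i1.add i0
      calc I2 + x * I1 + (1 - h) * I0
          = (∫ t in Set.Ioi (0:ℝ), t ^ (-1/h + 1 + 1) * Real.exp (-(t ^ 2 / 2 + x * t) / h))
            + ((∫ t in Set.Ioi (0:ℝ), x * (t ^ (-1/h + 1) * Real.exp (-(t ^ 2 / 2 + x * t) / h)))
            + (∫ t in Set.Ioi (0:ℝ), (1 - h) * (t ^ (-1/h) * Real.exp (-(t ^ 2 / 2 + x * t) / h)))) := by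
            rw [MeasureTheory.integral_const_mul, MeasureTheory.integral_const_mul]
            ring
        _ = ∫ t in Set.Ioi (0:ℝ),
            (t ^ (-1/h + 1 + 1) * Real.exp (-(t ^ 2 / 2 + x * t) / h)
              + (x * (t ^ (-1/h + 1) * Real.exp (-(t ^ 2 / 2 + x * t) / h))
              + (1 - h) * (t ^ (-1/h) * Real.exp (-(t ^ 2 / 2 + x * t) / h)))) := by
            rw [MeasureTheory.integral_add i2 i10, MeasureTheory.integral_add i1 i0]
        _ = ∫ t in Set.Ioi (0:ℝ),
            (t ^ (-1/h + 1 + 1) * Real.exp (-(t ^ 2 / 2 + x * t) / h)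
              + x * (t ^ (-1/h + 1) * Real.exp (-(t ^ 2 / 2 + x * t) / h))
              + (1 - h) * (t ^ (-1/h) * Real.exp (-(t ^ 2 / 2 + x * t) / h))) := by
            congr 1
            funext t
            ring
        _ = 0 := qc_ftc h hh x
    rw [e0, e1, e2]
    have c2 : h ^ 2 * (((1:ℝ) * -(1/h)) * -(1/h)) = 1 := by field_simp
    have c1 : h * ((1:ℝ) * -(1/h)) = -1 := by field_simp
    linear_combination key + I2 * c2 - x * I1 * c1
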